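/- Let P_θ be a row-stochastic matrix over S, let V₀, B₁, Dᴬ, r_θ : S → ℝ and ε > 0, and suppose the entrywise inequality r_θ ⪰ (1 − γ·P_θ) *ᵥ V₀ + ε·B₁ − Dᴬ holds. Then 1 − γ·P_θ is invertible and the vector V_θ := (1 − γ·P_θ)⁻¹ *ᵥ r_θ satisfies the entrywise inequality V_θ ⪰ V₀ + (1 − γ·P_θ)⁻¹ *ᵥ (ε·B₁ − Dᴬ); consequently, for any d : S → ℝ with d(s) ≥ 0 for all s, ∑_s d(s)·V_θ(s) ≥ ∑_s d(s)·V₀(s) + ∑_s d(s)·((1 − γ·P_θ)⁻¹ *ᵥ (ε·B₁ − Dᴬ))(s). (Performance improvement guarantee with policy approximation error, in matrix form.) -/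
import Mathlib


open Matrix

theorem stmt10 {S : Type*} [Fintype S] [Nonempty S] [DecidableEq S]
    (γ : ℝ) (hγ : γ ∈ Set.Ioo (0 : ℝ) 1)
    (Pθ : Matrix S S ℝ)
    (hPnn : ∀ s s', 0 ≤ Pθ s s') (hProw : ∀ s, ∑ s', Pθ s s' = 1)
    (V₀ B₁ DA rθ : S → ℝ) (ε : ℝ) (hε : 0 < ε)
    (hr : ∀ s, ((1 - γ • Pθ) *ᵥ V₀) s + ε * B₁ s - DA s ≤ rθ s) :
    IsUnit (1 - γ • Pθ) ∧
    (∀ s, V₀ s + ((1 - γ • Pθ)⁻¹ *ᵥ (ε • B₁ - DA)) s ≤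
      ((1 - γ • Pθ)⁻¹ *ᵥ rθ) s) ∧
    ∀ d : S → ℝ, (∀ s, 0 ≤ d s) →
      ∑ s, d s * V₀ s + ∑ s, d s * ((1 - γ • Pθ)⁻¹ *ᵥ (ε • B₁ - DA)) s ≤
        ∑ s, d s * ((1 - γ • Pθ)⁻¹ *ᵥ rθ) s := by
  obtain ⟨hγ0, hγ1⟩ := hγ
  set A : Matrix S S ℝ := 1 - γ • Pθ with hA
  have hAapp : ∀ (x : S → ℝ) s, (A *ᵥ x) s = x s - γ * (Pθ *ᵥ x) s := by
    intro x s
    simp [hA, sub_mulVec, one_mulVec, smul_mulVec, Pi.sub_apply,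
      Pi.smul_apply, smul_eq_mul]
  -- bound on P *ᵥ x by max / min
  have hPbound : ∀ (x : S → ℝ) (M : ℝ), (∀ s', |x s'| ≤ M) → ∀ s, |(Pθ *ᵥ x) s| ≤ M := by
    intro x M hM s
    have hMnn : 0 ≤ M := le_trans (abs_nonneg _) (hM (Classical.arbitrary S))
    calc |(Pθ *ᵥ x) s| ≤ ∑ s', |Pθ s s' * x s'| := by
          simpa [mulVec, dotProduct] using Finset.abs_sum_le_sum_abs (fun s' => Pθ s s' * x s') Finset.univ
      _ ≤ ∑ s', Pθ s s' * M := by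
          apply Finset.sum_le_sum
          intro s' _
          rw [abs_mul, abs_of_nonneg (hPnn s s')]
          exact mul_le_mul_of_nonneg_left (hM s') (hPnn s s')
      _ = M := by rw [← Finset.sum_mul, hProw, one_mul]
  -- kernel trivial
  have hker : ∀ v : S → ℝ, A *ᵥ v = 0 → v = 0 := by
    intro v hv
    obtain ⟨s, -, hs⟩ := Finset.exists_max_image Finset.univ (fun s => |v s|)
      ⟨Classical.arbitrary S, Finset.mem_univ _⟩
    have hveq : ∀ t, v t = γ * (Pθ *ᵥ v) t := by
      intro t
      have := congrFun hv t
      rw [hAapp] at this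
      simp only [Pi.zero_apply, sub_eq_zero] at this
      exact this
    have hb : |v s| ≤ γ * |v s| := by
      calc |v s| = γ * |(Pθ *ᵥ v) s| := by
            rw [hveq s, abs_mul, abs_of_pos hγ0]
        _ ≤ γ * |v s| := by
            exact mul_le_mul_of_nonneg_left
              (hPbound v (|v s|) (fun s' => hs s' (Finset.mem_univ _)) s) hγ0.le
    have : |v s| ≤ 0 := by nlinarith [abs_nonneg (v s)]
    funext t
    have ht := hs t (Finset.mem_univ t)
    have : |v t| ≤ 0 := le_trans ht this
    simpa using le_antisymm this (abs_nonneg _)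
  have hdet : A.det ≠ 0 := by
    intro h
    obtain ⟨v, hv0, hv⟩ := (Matrix.exists_mulVec_eq_zero_iff).mpr h
    exact hv0 (hker v hv)
  have hU : IsUnit A := (Matrix.isUnit_iff_isUnit_det A).mpr (isUnit_iff_ne_zero.mpr hdet)
  -- A *ᵥ (A⁻¹ *ᵥ w) = w
  have hinv : ∀ w : S → ℝ, A *ᵥ (A⁻¹ *ᵥ w) = w := by
    intro w
    rw [Matrix.mulVec_mulVec, Matrix.mul_nonsing_inv A (isUnit_iff_ne_zero.mpr hdet), Matrix.one_mulVec]
  -- monotonicity: w ≥ 0 entrywise → A⁻¹ *ᵥ w ≥ 0 entrywise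
  have hmono : ∀ w : S → ℝ, (∀ s, 0 ≤ w s) → ∀ s, 0 ≤ (A⁻¹ *ᵥ w) s := by
    intro w hw
    set x : S → ℝ := A⁻¹ *ᵥ w with hx
    have hAx : ∀ t, x t - γ * (Pθ *ᵥ x) t = w t := by
      intro t
      rw [← hAapp]
      rw [hx, hinv]
    obtain ⟨s, -, hs⟩ := Finset.exists_min_image Finset.univ (fun s => x s)
      ⟨Classical.arbitrary S, Finset.mem_univ _⟩
    have hPx : x s ≤ (Pθ *ᵥ x) s := by
      have : ∑ s', Pθ s s' * x s ≤ ∑ s', Pθ s s' * x s' :=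
        Finset.sum_le_sum (fun s' _ =>
          mul_le_mul_of_nonneg_left (hs s' (Finset.mem_univ _)) (hPnn s s'))
      calc x s = ∑ s', Pθ s s' * x s := by rw [← Finset.sum_mul, hProw, one_mul]
        _ ≤ ∑ s', Pθ s s' * x s' := this
        _ = (Pθ *ᵥ x) s := by simp [mulVec, dotProduct]
    have hxs : 0 ≤ x s := by
      have h1 := hAx s
      have h2 := hw s
      nlinarith
    intro t
    exact le_trans hxs (hs t (Finset.mem_univ _))
  -- main entrywise inequality
  have hmain : ∀ s, V₀ s + (A⁻¹ *ᵥ (ε • B₁ - DA)) s ≤ (A⁻¹ *ᵥ rθ) s := by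
    intro s
    have hdecomp : A⁻¹ *ᵥ rθ = V₀ + A⁻¹ *ᵥ (rθ - A *ᵥ V₀) := by
      rw [Matrix.mulVec_sub]
      have : A⁻¹ *ᵥ (A *ᵥ V₀) = V₀ := by
        rw [Matrix.mulVec_mulVec, Matrix.nonsing_inv_mul A (isUnit_iff_ne_zero.mpr hdet), Matrix.one_mulVec]
      rw [this]
      ext t; simp [add_sub_cancel]
    have hnn : ∀ t, 0 ≤ (A⁻¹ *ᵥ (rθ - A *ᵥ V₀ - (ε • B₁ - DA))) t := by
      apply hmono
      intro t
      have := hr t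
      simp only [Pi.sub_apply, Pi.smul_apply, smul_eq_mul]
      linarith
    have h := hnn s
    rw [Matrix.mulVec_sub] at h
    simp only [Pi.sub_apply] at h
    rw [hdecomp]
    simp only [Pi.add_apply]
    linarith
  refine ⟨hU, hmain, ?_⟩
  intro d hd
  rw [← Finset.sum_add_distrib]
  apply Finset.sum_le_sum
  intro s _
  rw [← mul_add]
  exact mul_le_mul_of_nonneg_left (hmain s) (hd s)
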